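/- (Strassmann's theorem) Let K be a complete nonarchimedean normed field, r > 0, and (a_j) a sequence in K, not all zero, with |a_j| r^j → 0. Let N be a nonnegative integer such that |a_j| r^j < |a_N| r^N for every j > N. Then the function f(x) = ∑_{j≥0} a_j x^j has at most N zeros in the closed ball {x ∈ K : |x| ≤ r}. -/

import Mathlib

open Filter

namespace Strassmann

open IsUltrametricDist

lemma exists_uniform_bound {c : ℕ → ℝ} {B : ℝ} (hB : 0 < B)
    (hc : Tendsto c atTop (nhds 0)) (hlt : ∀ j, c j < B) :
    ∃ C, C < B ∧ ∀ j, c j ≤ C := by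
  obtain ⟨M, hM⟩ := Metric.tendsto_atTop.mp hc (B / 2) (by linarith)
  refine ⟨max (B / 2) ((Finset.range (M + 1)).sup' (by simp) c), ?_, ?_⟩
  · exact max_lt (by linarith) ((Finset.sup'_lt_iff (by simp)).mpr fun j _ => hlt j)
  · intro j
    rcases le_or_gt j M with hj | hj
    · exact le_trans (Finset.le_sup' c (by simp; omega)) (le_max_right _ _)
    · refine le_trans ?_ (le_max_left _ _)
      have := hM j (by omega)
      rw [Real.dist_eq, sub_zero] at this
      exact (le_abs_self _).trans this.le

variable {K : Type*} [NormedField K] [CompleteSpace K] [IsUltrametricDist K]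

lemma norm_tsum_eq_dominant {f : ℕ → K} (hf : Summable f) {n : ℕ} {C : ℝ}
    (hC : C < ‖f n‖) (h : ∀ j, j ≠ n → ‖f j‖ ≤ C) : ‖∑' j, f j‖ = ‖f n‖ := by
  have h0C : 0 ≤ C := le_trans (norm_nonneg _) (h (n + 1) (by omega))
  rw [hf.tsum_eq_add_tsum_ite n]
  have hg : ‖∑' j, if j = n then 0 else f j‖ ≤ C := by
    refine norm_tsum_le_of_forall_le_of_nonneg h0C fun j => ?_
    split_ifs with hj
    · simpa using h0C
    · exact h j hj
  rw [norm_add_eq_max_of_norm_ne_norm (hg.trans_lt hC).ne']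
  exact max_eq_left (hg.trans hC.le)

lemma summable_aux {f : ℕ → K} {c : ℕ → ℝ} (hb : ∀ j, ‖f j‖ ≤ c j)
    (hc : Tendsto c atTop (nhds 0)) : Summable f := by
  apply NonarchimedeanAddGroup.summable_of_tendsto_cofinite_zero
  rw [Nat.cofinite_eq_atTop]
  exact squeeze_zero_norm hb hc

lemma summable_prod_aux {F : ℕ × ℕ → K}
    (h : ∀ ε, 0 < ε → ∃ M, ∀ p : ℕ × ℕ, ε ≤ ‖F p‖ → p.1 < M ∧ p.2 < M) :
    Summable F := by
  apply NonarchimedeanAddGroup.summable_of_tendsto_cofinite_zero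
  rw [Metric.tendsto_nhds]
  intro ε hε
  rw [Filter.eventually_cofinite]
  obtain ⟨M, hM⟩ := h ε hε
  apply Set.Finite.subset ((Set.finite_Iio M).prod (Set.finite_Iio M))
  intro p hp
  simp only [dist_zero_right, not_lt] at hp
  exact (hM p hp)

theorem main (r : ℝ) (hr : 0 < r) :
    ∀ N : ℕ, ∀ a : ℕ → K,
      Tendsto (fun j => ‖a j‖ * r ^ j) atTop (nhds 0) →
      (∀ j, N < j → ‖a j‖ * r ^ j < ‖a N‖ * r ^ N) →
      {x : K | ‖x‖ ≤ r ∧ (∑' j : ℕ, a j * x ^ j) = 0}.Finite ∧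
      {x : K | ‖x‖ ≤ r ∧ (∑' j : ℕ, a j * x ^ j) = 0}.ncard ≤ N := by
  intro N
  induction N with
  | zero =>
    intro a h_decay hN
    have hB : 0 < ‖a 0‖ * r ^ 0 :=
      lt_of_le_of_lt (by positivity) (hN 1 (by omega))
    obtain ⟨C, hCB, hCle⟩ := exists_uniform_bound hB
      (c := fun j => ‖a (j + 1)‖ * r ^ (j + 1))
      (by simpa [Function.comp_def] using h_decay.comp (tendsto_add_atTop_nat 1))
      (fun j => hN (j + 1) (by omega))
    have hset : {x : K | ‖x‖ ≤ r ∧ (∑' j : ℕ, a j * x ^ j) = 0} = ∅ := by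
      rw [Set.eq_empty_iff_forall_notMem]
      rintro x ⟨hx, hx0⟩
      have hbound : ∀ j : ℕ, ‖a j * x ^ j‖ ≤ ‖a j‖ * r ^ j := fun j => by
        rw [norm_mul, norm_pow]
        exact mul_le_mul_of_nonneg_left (pow_le_pow_left₀ (norm_nonneg x) hx j)
          (norm_nonneg _)
      have hsum : Summable fun j => a j * x ^ j := summable_aux hbound h_decay
      have hnorm : ‖∑' j : ℕ, a j * x ^ j‖ = ‖a 0 * x ^ 0‖ := by
        refine norm_tsum_eq_dominant hsum (C := C) ?_ ?_
        · simpa using lt_of_lt_of_le hCB (by simp)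
        · intro j hj
          refine (hbound j).trans ?_
          have := hCle (j - 1)
          rwa [Nat.sub_add_cancel (by omega)] at this
      rw [hx0] at hnorm
      simp only [pow_zero, mul_one, norm_zero] at hnorm
      simp only [pow_zero, mul_one] at hB
      linarith
    rw [hset]
    exact ⟨Set.finite_empty, by simp⟩
  | succ N ih =>
    intro a h_decay hN
    rcases Set.eq_empty_or_nonempty
      {x : K | ‖x‖ ≤ r ∧ (∑' j : ℕ, a j * x ^ j) = 0} with hS | ⟨x0, hx0r, hx00⟩
    · rw [hS]; exact ⟨Set.finite_empty, by simp⟩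
    have hB : 0 < ‖a (N + 1)‖ * r ^ (N + 1) :=
      lt_of_le_of_lt (by positivity) (hN (N + 2) (by omega))
    obtain ⟨C, hCB, hCle'⟩ := exists_uniform_bound hB
      (c := fun j => ‖a (j + (N + 2))‖ * r ^ (j + (N + 2)))
      (by simpa [Function.comp_def] using h_decay.comp (tendsto_add_atTop_nat (N + 2)))
      (fun j => hN (j + (N + 2)) (by omega))
    have hCle : ∀ j, N + 1 < j → ‖a j‖ * r ^ j ≤ C := by
      intro j hj
      have := hCle' (j - (N + 2))
      rwa [Nat.sub_add_cancel (by omega)] at this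
    have hC0 : 0 ≤ C := le_trans (by positivity) (hCle (N + 2) (by omega))
    -- the quotient series
    set b : ℕ → K := fun k => ∑' i : ℕ, a (k + 1 + i) * x0 ^ i with hbdef
    have hterm : ∀ k i : ℕ,
        ‖a (k + 1 + i) * x0 ^ i‖ ≤ ‖a (k + 1 + i)‖ * r ^ (k + 1 + i) / r ^ (k + 1) := by
      intro k i
      rw [norm_mul, norm_pow]
      have h1 : ‖a (k + 1 + i)‖ * r ^ (k + 1 + i) / r ^ (k + 1)
          = ‖a (k + 1 + i)‖ * r ^ i := by
        rw [pow_add]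
        field_simp
      rw [h1]
      exact mul_le_mul_of_nonneg_left (pow_le_pow_left₀ (norm_nonneg x0) hx0r i)
        (norm_nonneg _)
    have hshift : ∀ m : ℕ, Tendsto (fun i => ‖a (m + 1 + i)‖ * r ^ (m + 1 + i))
        atTop (nhds 0) := by
      intro m
      have := h_decay.comp (tendsto_add_atTop_nat (m + 1))
      simpa [Function.comp_def, Nat.add_comm] using this
    have hsumb : ∀ k, Summable fun i => a (k + 1 + i) * x0 ^ i := by
      intro k
      refine summable_aux (hterm k) ?_
      simpa using (hshift k).div_const (r ^ (k + 1))
    -- bounds on b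
    have hbnorm : ∀ k, N + 1 ≤ k → ‖b k‖ ≤ C / r ^ (k + 1) := by
      intro k hk
      refine norm_tsum_le_of_forall_le_of_nonneg (by positivity) fun i => ?_
      refine (hterm k i).trans ?_
      have h1 : ‖a (k + 1 + i)‖ * r ^ (k + 1 + i) ≤ C := hCle _ (by omega)
      gcongr
    have hbkr : ∀ k, N + 1 ≤ k → ‖b k‖ * r ^ k ≤ C / r := by
      intro k hk
      have h1 : C / r ^ (k + 1) * r ^ k = C / r := by
        rw [pow_succ]
        field_simp
      calc ‖b k‖ * r ^ k ≤ C / r ^ (k + 1) * r ^ k :=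
            mul_le_mul_of_nonneg_right (hbnorm k hk) (by positivity)
        _ = C / r := h1
    have hbN : ‖b N‖ = ‖a (N + 1)‖ := by
      have := norm_tsum_eq_dominant (hsumb N) (n := 0) (C := C / r ^ (N + 1)) ?_ ?_
      · simpa using this
      · have h2 : C / r ^ (N + 1) < (‖a (N + 1)‖ * r ^ (N + 1)) / r ^ (N + 1) := by
          gcongr
        rw [mul_div_assoc, div_self (by positivity), mul_one] at h2
        simpa using h2
      · intro i hi
        refine (hterm N i).trans ?_
        have h1 : ‖a (N + 1 + i)‖ * r ^ (N + 1 + i) ≤ C := hCle _ (by omega)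
        gcongr
    have hbNr : ‖b N‖ * r ^ N = (‖a (N + 1)‖ * r ^ (N + 1)) / r := by
      rw [hbN, pow_succ]
      field_simp
    have hNb : ∀ k, N < k → ‖b k‖ * r ^ k < ‖b N‖ * r ^ N := by
      intro k hk
      rw [hbNr]
      refine lt_of_le_of_lt (hbkr k (by omega)) ?_
      gcongr
    have hdecb : Tendsto (fun k => ‖b k‖ * r ^ k) atTop (nhds 0) := by
      rw [Metric.tendsto_atTop]
      intro ε hε
      obtain ⟨M, hM⟩ := Metric.tendsto_atTop.mp h_decay (ε * r / 2) (by positivity)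
      refine ⟨M, fun k hk => ?_⟩
      have hbk : ‖b k‖ ≤ ε * r / 2 / r ^ (k + 1) := by
        refine norm_tsum_le_of_forall_le_of_nonneg (by positivity) fun i => ?_
        refine (hterm k i).trans ?_
        have h1 := hM (k + 1 + i) (by omega)
        rw [Real.dist_eq, sub_zero] at h1
        have h2 : ‖a (k + 1 + i)‖ * r ^ (k + 1 + i) ≤ ε * r / 2 :=
          ((le_abs_self _).trans h1.le)
        gcongr
      have h3 : ε * r / 2 / r ^ (k + 1) * r ^ k = ε / 2 := by
        rw [pow_succ]
        field_simp
      rw [Real.dist_eq, sub_zero, abs_of_nonneg (by positivity)]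
      calc ‖b k‖ * r ^ k ≤ ε * r / 2 / r ^ (k + 1) * r ^ k :=
            mul_le_mul_of_nonneg_right hbk (by positivity)
        _ = ε / 2 := h3
        _ < ε := by linarith
    obtain ⟨hfin', hcard'⟩ := ih b hdecb hNb
    -- the factorization
    have hfac : ∀ x : K, ‖x‖ ≤ r →
        (∑' j : ℕ, a j * x ^ j) = (x - x0) * ∑' k : ℕ, b k * x ^ k := by
      intro x hx
      have hbound : ∀ (y : K), ‖y‖ ≤ r → ∀ j : ℕ, ‖a j * y ^ j‖ ≤ ‖a j‖ * r ^ j := by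
        intro y hy j
        rw [norm_mul, norm_pow]
        exact mul_le_mul_of_nonneg_left (pow_le_pow_left₀ (norm_nonneg y) hy j)
          (norm_nonneg _)
      have S1 : Summable fun j => a j * x ^ j := summable_aux (hbound x hx) h_decay
      have S0 : Summable fun j => a j * x0 ^ j := summable_aux (hbound x0 hx0r) h_decay
      set H : ℕ × ℕ → K :=
        fun p => if p.2 < p.1 then a p.1 * x ^ p.2 * x0 ^ (p.1 - 1 - p.2) else 0 with hHdef
      set G : ℕ × ℕ → K := fun p => a (p.1 + 1 + p.2) * x0 ^ p.2 * x ^ p.1 with hGdef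
      -- uniform smallness of the generic term
      have hnorm3 : ∀ j k m : ℕ, ‖a j * x ^ k * x0 ^ m‖ ≤ ‖a j‖ * r ^ (k + m) := by
        intro j k m
        rw [norm_mul, norm_mul, norm_pow, norm_pow, pow_add, ← mul_assoc]
        have h1 : ‖x‖ ^ k ≤ r ^ k := pow_le_pow_left₀ (norm_nonneg x) hx k
        have h2 : ‖x0‖ ^ m ≤ r ^ m := pow_le_pow_left₀ (norm_nonneg x0) hx0r m
        have h3 : (0:ℝ) ≤ ‖x‖ ^ k := by positivity
        have h4 : (0:ℝ) ≤ ‖x0‖ ^ m := by positivity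
        gcongr
      have hsmall : ∀ ε : ℝ, 0 < ε → ∃ M, ∀ j, M ≤ j → ∀ k m : ℕ, k + m + 1 = j →
          ‖a j * x ^ k * x0 ^ m‖ < ε := by
        intro ε hε
        obtain ⟨M, hM⟩ := Metric.tendsto_atTop.mp h_decay (ε * r) (by positivity)
        refine ⟨M, fun j hj k m hkm => ?_⟩
        have h1 := hM j hj
        rw [Real.dist_eq, sub_zero] at h1
        have h2 : ‖a j‖ * r ^ j < ε * r := (le_abs_self _).trans_lt h1
        have h3 : ‖a j‖ * r ^ (k + m) * r < ε * r := by
          calc ‖a j‖ * r ^ (k + m) * r = ‖a j‖ * r ^ j := by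
                rw [mul_assoc, ← pow_succ, hkm]
            _ < ε * r := h2
        have h4 : ‖a j‖ * r ^ (k + m) < ε := lt_of_mul_lt_mul_right h3 hr.le
        exact (hnorm3 j k m).trans_lt h4
      have hsumH : Summable H := by
        apply summable_prod_aux
        intro ε hε
        obtain ⟨M, hM⟩ := hsmall ε hε
        refine ⟨M, ?_⟩
        rintro ⟨j, k⟩ hp
        by_cases hkj : k < j
        · have hjM : j < M := by
            by_contra hge
            push_neg at hge
            have := hM j hge k (j - 1 - k) (by omega)
            rw [hHdef] at hp
            simp only [if_pos hkj] at hp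
            linarith
          exact ⟨hjM, by omega⟩
        · exfalso
          rw [hHdef] at hp
          simp only [if_neg hkj, norm_zero] at hp
          linarith
      have hsumG : Summable G := by
        apply summable_prod_aux
        intro ε hε
        obtain ⟨M, hM⟩ := hsmall ε hε
        refine ⟨M, ?_⟩
        rintro ⟨k, i⟩ hp
        have hGval : G (k, i) = a (k + 1 + i) * x ^ k * x0 ^ i := by
          rw [hGdef]; ring
        rw [hGval] at hp
        have hjM : k + 1 + i < M := by
          by_contra hge
          push_neg at hge
          have := hM (k + 1 + i) hge k i (by omega)
          linarith
        exact ⟨by omega, by omega⟩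
      have hHrow : ∀ j, ∀ k ∉ Finset.range j, H (j, k) = 0 := by
        intro j k hk
        rw [hHdef]
        simp only
        rw [if_neg (by simpa using hk)]
      have hHsum2 : ∀ j, Summable fun k => H (j, k) :=
        fun j => summable_of_ne_finset_zero (hHrow j)
      have step1 : ∀ j : ℕ, a j * x ^ j - a j * x0 ^ j = (x - x0) * ∑' k, H (j, k) := by
        intro j
        have hts : ∑' k, H (j, k)
            = ∑ k ∈ Finset.range j, a j * x ^ k * x0 ^ (j - 1 - k) := by
          rw [tsum_eq_sum (hHrow j)]
          refine Finset.sum_congr rfl fun k hk => ?_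
          rw [hHdef]
          simp only
          rw [if_pos (by simpa using hk)]
        have h2 : ∑ k ∈ Finset.range j, a j * x ^ k * x0 ^ (j - 1 - k)
            = a j * ∑ k ∈ Finset.range j, x ^ k * x0 ^ (j - 1 - k) := by
          rw [Finset.mul_sum]
          exact Finset.sum_congr rfl fun k _ => by ring
        have h3 := geom_sum₂_mul x x0 j
        calc a j * x ^ j - a j * x0 ^ j = a j * (x ^ j - x0 ^ j) := by ring
          _ = a j * ((∑ k ∈ Finset.range j, x ^ k * x0 ^ (j - 1 - k)) * (x - x0)) := by
              rw [h3]
          _ = (x - x0) * ∑ k ∈ Finset.range j, a j * x ^ k * x0 ^ (j - 1 - k) := by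
              rw [h2]; ring
          _ = (x - x0) * ∑' k, H (j, k) := by rw [hts]
      have e1 : (∑' j : ℕ, a j * x ^ j) = ∑' j : ℕ, (a j * x ^ j - a j * x0 ^ j) := by
        rw [S1.tsum_sub S0, hx00, sub_zero]
      have e3 : ∑' p : ℕ × ℕ, H p = ∑' p : ℕ × ℕ, G p := by
        have hinj : Function.Injective (fun p : ℕ × ℕ => ((p.1 + 1 + p.2, p.1) : ℕ × ℕ)) := by
          rintro ⟨k, i⟩ ⟨k', i'⟩ h
          simp only [Prod.mk.injEq] at h
          obtain ⟨h1, h2⟩ := h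
          exact Prod.ext h2 (by omega)
        have hsupp : Function.support H ⊆
            Set.range (fun p : ℕ × ℕ => ((p.1 + 1 + p.2, p.1) : ℕ × ℕ)) := by
          rintro ⟨j, k⟩ hp
          have hkj : k < j := by
            by_contra h
            apply hp
            rw [hHdef]
            simp only
            rw [if_neg (by simpa using h)]
          exact ⟨(k, j - 1 - k), Prod.ext (by simp; omega) rfl⟩
        rw [← Function.Injective.tsum_eq hinj hsupp]
        refine tsum_congr fun p => ?_
        have h1 : p.1 < p.1 + 1 + p.2 := by omega
        have h2 : p.1 + 1 + p.2 - 1 - p.1 = p.2 := by omega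
        rw [hHdef, hGdef]
        simp only
        rw [if_pos h1, h2]
        ring
      have e2 : ∑' p : ℕ × ℕ, H p = ∑' j, ∑' k, H (j, k) := hsumH.tsum_prod' hHsum2
      have hsumGrow : ∀ k : ℕ, Summable fun i => G (k, i) := by
        intro k
        have := (hsumb k).mul_right (x ^ k)
        exact this
      have e4 : ∑' p : ℕ × ℕ, G p = ∑' k, ∑' i, G (k, i) := hsumG.tsum_prod' hsumGrow
      have e5 : ∀ k : ℕ, ∑' i, G (k, i) = b k * x ^ k := by
        intro k
        exact (hsumb k).tsum_mul_right (x ^ k)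
      calc (∑' j : ℕ, a j * x ^ j) = ∑' j : ℕ, (a j * x ^ j - a j * x0 ^ j) := e1
        _ = ∑' j : ℕ, (x - x0) * ∑' k, H (j, k) := tsum_congr step1
        _ = (x - x0) * ∑' j, ∑' k, H (j, k) := tsum_mul_left
        _ = (x - x0) * ∑' p : ℕ × ℕ, H p := by rw [← e2]
        _ = (x - x0) * ∑' p : ℕ × ℕ, G p := by rw [e3]
        _ = (x - x0) * ∑' k, ∑' i, G (k, i) := by rw [e4]
        _ = (x - x0) * ∑' k, b k * x ^ k := by
            congr 1
            exact tsum_congr e5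
    have hsub : {x : K | ‖x‖ ≤ r ∧ (∑' j : ℕ, a j * x ^ j) = 0} ⊆
        insert x0 {x : K | ‖x‖ ≤ r ∧ (∑' j : ℕ, b j * x ^ j) = 0} := by
      rintro x ⟨hxr, hx0⟩
      rw [hfac x hxr] at hx0
      rcases mul_eq_zero.mp hx0 with h | h
      · exact Set.mem_insert_iff.mpr (Or.inl (sub_eq_zero.mp h))
      · exact Set.mem_insert_iff.mpr (Or.inr ⟨hxr, h⟩)
    have hfin : {x : K | ‖x‖ ≤ r ∧ (∑' j : ℕ, a j * x ^ j) = 0}.Finite :=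
      (hfin'.insert x0).subset hsub
    refine ⟨hfin, ?_⟩
    calc {x : K | ‖x‖ ≤ r ∧ (∑' j : ℕ, a j * x ^ j) = 0}.ncard
        ≤ (insert x0 {x : K | ‖x‖ ≤ r ∧ (∑' j : ℕ, b j * x ^ j) = 0}).ncard :=
          Set.ncard_le_ncard hsub (hfin'.insert x0)
      _ ≤ {x : K | ‖x‖ ≤ r ∧ (∑' j : ℕ, b j * x ^ j) = 0}.ncard + 1 :=
          Set.ncard_insert_le x0 _
      _ ≤ N + 1 := by omega

end Strassmann

/-- Strassmann's theorem: over a complete nonarchimedean field `K`, if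
`‖a_j‖ r^j → 0`, not all `a_j` are zero, and `N` satisfies
`‖a_j‖ r^j < ‖a_N‖ r^N` for all `j > N`, then `f(x) = ∑ a_j x^j` has at most
`N` zeros in the closed ball `{x : ‖x‖ ≤ r}`. -/
theorem stmt_19 {K : Type*} [NormedField K] [CompleteSpace K]
    (h_na : ∀ x y : K, ‖x + y‖ ≤ max ‖x‖ ‖y‖)
    (r : ℝ) (hr : 0 < r) (a : ℕ → K)
    (h_ne : ∃ j, a j ≠ 0)
    (h_decay : Tendsto (fun j => ‖a j‖ * r ^ j) atTop (nhds 0))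
    (N : ℕ) (hN : ∀ j, N < j → ‖a j‖ * r ^ j < ‖a N‖ * r ^ N) :
    {x : K | ‖x‖ ≤ r ∧ (∑' j : ℕ, a j * x ^ j) = 0}.Finite ∧
    {x : K | ‖x‖ ≤ r ∧ (∑' j : ℕ, a j * x ^ j) = 0}.ncard ≤ N := by
  have : IsUltrametricDist K :=
    IsUltrametricDist.isUltrametricDist_of_forall_norm_add_le_max_norm h_na
  exact Strassmann.main r hr N a h_decay hN
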